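/- The semigroup A presented by ⟨a, b | a*a*b = a⟩ is not an LWF semigroup. -/

import Mathlib

namespace Stmt15

/-- A semigroup `S` is LWF (locally wrapped by the class of finite semigroups) if for every
finite subset `H` of `S` there exist a finite semigroup `D` and a function `d : D → S` such
that `H ⊆ d(D)` and `d (x' * y') = d x' * d y'` whenever `d x', d y' ∈ H`. -/
def IsLWF (S : Type*) [Semigroup S] : Prop :=
  ∀ H : Finset S, ∃ (D : Type) (_ : Semigroup D) (_ : Fintype D) (d : D → S),
    (↑H ⊆ Set.range d) ∧
      ∀ x' y' : D, d x' ∈ H → d y' ∈ H → d (x' * y') = d x' * d y'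

/-- The generator `a` of the free semigroup on two generators. -/
def a : FreeSemigroup (Fin 2) := FreeSemigroup.of 0

/-- The generator `b` of the free semigroup on two generators. -/
def b : FreeSemigroup (Fin 2) := FreeSemigroup.of 1

/-- The defining relation `a * a * b = a`. -/
def rel : FreeSemigroup (Fin 2) → FreeSemigroup (Fin 2) → Prop :=
  fun x y => x = a * a * b ∧ y = a

/-- The semigroup `A = ⟨a, b ∣ aab = a⟩`. -/
def A : Type := (conGen rel).Quotient

instance : Semigroup A := Con.semigroup _

/-! ### Auxiliary: a "tropical" semigroup used to distinguish elements of `A`. -/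

/-- Pairs `(dd, mm)` where `dd` records the total `a`-minus-`b` count of a word and `mm` the
minimal height of a prefix; this carries enough information to distinguish `a` from `aba`
in `A`. -/
structure Trop where
  dd : ℤ
  mm : ℤ

namespace Trop

instance : Mul Trop := ⟨fun s t => ⟨s.dd + t.dd, min s.mm (s.dd + t.mm)⟩⟩

lemma mul_def (s t : Trop) : s * t = ⟨s.dd + t.dd, min s.mm (s.dd + t.mm)⟩ := rfl

instance : Semigroup Trop where
  mul_assoc s t u := by
    simp only [mul_def, Trop.mk.injEq]
    refine ⟨by ring, by omega⟩

end Trop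

/-- Images of the two generators in `Trop`. -/
def gens : Fin 2 → Trop
  | 0 => ⟨1, 1⟩
  | 1 => ⟨-1, -1⟩

/-- The canonical homomorphism from the free semigroup to `Trop`. -/
def fhom : FreeSemigroup (Fin 2) →ₙ* Trop := FreeSemigroup.lift gens

lemma fhom_a : fhom a = ⟨1, 1⟩ := by
  simp [fhom, a, gens, FreeSemigroup.lift_of]

lemma fhom_b : fhom b = ⟨-1, -1⟩ := by
  simp [fhom, b, gens, FreeSemigroup.lift_of]

/-- The kernel congruence of `fhom`. -/
def tropCon : Con (FreeSemigroup (Fin 2)) :=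
  ⟨⟨fun u v => fhom u = fhom v, ⟨fun _ => rfl, Eq.symm, Eq.trans⟩⟩,
    fun h1 h2 => by simp only [map_mul]; rw [h1, h2]⟩

lemma conGen_le_trop : conGen rel ≤ tropCon := by
  apply Con.conGen_le.mpr
  rintro x y ⟨rfl, rfl⟩
  show fhom (a * a * b) = fhom a
  rw [map_mul, map_mul, fhom_a, fhom_b]
  simp only [Trop.mul_def, Trop.mk.injEq]
  refine ⟨by norm_num, by omega⟩

/-- The canonical map to `A`. -/
def pi (w : FreeSemigroup (Fin 2)) : A := (w : (conGen rel).Quotient)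

lemma pi_mul (u v : FreeSemigroup (Fin 2)) : pi (u * v) = pi u * pi v := rfl

lemma pi_rel : pi (a * a * b) = pi a :=
  ((conGen rel).eq).mpr (ConGen.Rel.of _ _ ⟨rfl, rfl⟩)

lemma pi_a_ne : pi a ≠ pi (a * b * a) := by
  intro h
  have h1 : (conGen rel) a (a * b * a) := ((conGen rel).eq).mp h
  have h2 : fhom a = fhom (a * b * a) := Con.le_def.mp conGen_le_trop h1
  rw [map_mul, map_mul, fhom_a, fhom_b] at h2
  simp only [Trop.mul_def, Trop.mk.injEq] at h2
  omega

/-! ### Auxiliary: powers and special sequences in an arbitrary semigroup. -/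

/-- `pw t k = t^(k+1)`. -/
def pw {D : Type*} [Semigroup D] (t : D) : ℕ → D
  | 0 => t
  | k + 1 => t * pw t k

section PowerLemmas

variable {D : Type*} [Semigroup D]

lemma pw_succ (t : D) (k : ℕ) : pw t (k + 1) = t * pw t k := rfl

lemma pw_succ' (t : D) (k : ℕ) : pw t (k + 1) = pw t k * t := by
  induction k with
  | zero => rfl
  | succ k ih =>
    show t * pw t (k + 1) = pw t (k + 1) * t
    conv_lhs => rw [ih]
    rw [← mul_assoc, ← pw_succ]

lemma pw_add (t : D) (i j : ℕ) : pw t (i + j + 1) = pw t i * pw t j := by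
  induction j with
  | zero => rw [pw_succ']; rfl
  | succ j ih =>
    have h : i + (j + 1) + 1 = (i + j + 1) + 1 := by omega
    rw [h, pw_succ', ih, pw_succ' t j, mul_assoc]

lemma exists_period [Finite D] (t : D) :
    ∃ i p : ℕ, 0 < p ∧ ∀ k r : ℕ, i ≤ k → pw t k = pw t (k + p * r) := by
  obtain ⟨i, j, hne, heq⟩ := Finite.exists_ne_map_eq_of_infinite (pw t)
  have main : ∀ i j : ℕ, i < j → pw t i = pw t j →
      ∃ i' p : ℕ, 0 < p ∧ ∀ k r : ℕ, i' ≤ k → pw t k = pw t (k + p * r) := by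
    intro i j hij heq
    have shift : ∀ s, pw t (i + s) = pw t (j + s) := by
      intro s
      induction s with
      | zero => simpa using heq
      | succ s ih =>
        have h1 : i + (s + 1) = (i + s) + 1 := by omega
        have h2 : j + (s + 1) = (j + s) + 1 := by omega
        rw [h1, h2, pw_succ, pw_succ, ih]
    have step : ∀ k, i ≤ k → pw t k = pw t (k + (j - i)) := by
      intro k hk
      have h1 : i + (k - i) = k := by omega
      have h2 : k + (j - i) = j + (k - i) := by omega
      calc pw t k = pw t (i + (k - i)) := by rw [h1]
        _ = pw t (j + (k - i)) := shift _
        _ = pw t (k + (j - i)) := by rw [h2]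
    refine ⟨i, j - i, by omega, ?_⟩
    intro k r hk
    induction r with
    | zero => simp
    | succ r ih =>
      have h3 : k + (j - i) * (r + 1) = (k + (j - i) * r) + (j - i) := by ring
      rw [h3, ← step (k + (j - i) * r) (by omega)]
      exact ih
  rcases Nat.lt_or_ge i j with h | h
  · exact main i j h heq
  · exact main j i (by omega) heq.symm

/-- `sig x y m = x^(m+1) * y^m`, built so that all intermediate values are controlled. -/
def sig (x y : D) : ℕ → D
  | 0 => x
  | m + 1 => (x * sig x y m) * y

lemma sig_pw (x y : D) (m : ℕ) : sig x y (m + 1) = pw x (m + 1) * pw y m := by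
  induction m with
  | zero => rfl
  | succ m ih =>
    show (x * sig x y (m + 1)) * y = _
    rw [ih, ← mul_assoc, ← pw_succ, mul_assoc, ← pw_succ' y]

/-- `pee x y T k = x^k * T * y^k`. -/
def pee (x y T : D) : ℕ → D
  | 0 => T
  | k + 1 => (x * pee x y T k) * y

lemma pee_eq (x y T : D) (k : ℕ) : pee x y T (k + 1) = pw x k * (T * pw y k) := by
  induction k with
  | zero => show (x * T) * y = x * (T * y); rw [mul_assoc]
  | succ k ih =>
    show (x * pee x y T (k + 1)) * y = _
    rw [ih, ← mul_assoc x (pw x k), ← pw_succ, mul_assoc, mul_assoc, ← pw_succ' y]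

end PowerLemmas

/-- The main combinatorial argument: no finite semigroup can wrap
`H = {a, a², b, ab}` in `A`. -/
lemma main_aux {D : Type*} [Semigroup D] [Finite D] (d : D → A) (H : Finset A)
    (ha : pi a ∈ H) (haa : pi a * pi a ∈ H) (hb : pi b ∈ H) (hab : pi a * pi b ∈ H)
    (hmul : ∀ x' y' : D, d x' ∈ H → d y' ∈ H → d (x' * y') = d x' * d y')
    (x y : D) (hx : d x = pi a) (hy : d y = pi b) : False := by
  -- basic identities in A
  have hS1 : (pi a * pi a) * pi b = pi a := by
    rw [← pi_mul, ← pi_mul]; exact pi_rel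
  have hS2 : pi a * (pi a * pi b) = pi a := by
    rw [← pi_mul, ← pi_mul, show a * (a * b) = a * a * b from (mul_assoc a a b).symm]
    exact pi_rel
  -- d-value of the sig sequence
  have dsig : ∀ m, d (sig x y m) = pi a := by
    intro m
    induction m with
    | zero => exact hx
    | succ m ih =>
      have h1 : d (x * sig x y m) = pi a * pi a := by
        rw [hmul x (sig x y m) (by rw [hx]; exact ha) (by rw [ih]; exact ha), hx, ih]
      show d ((x * sig x y m) * y) = pi a
      rw [hmul _ y (by rw [h1]; exact haa) (by rw [hy]; exact hb), h1, hy, hS1]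
  -- periods
  obtain ⟨i1, p1, hp1, hper1⟩ := exists_period x
  obtain ⟨i2, p2, hp2, hper2⟩ := exists_period y
  set ν : ℕ := max i1 i2 with hν
  set q : ℕ := p1 * p2 with hq
  have hqpos : 0 < q := Nat.mul_pos hp1 hp2
  have hν1 : i1 ≤ ν := le_max_left _ _
  have hν2 : i2 ≤ ν := le_max_right _ _
  -- the elements
  set s1 : D := sig x y (ν + 1) with hs1def
  set s2 : D := sig x y (ν + 2) with hs2def
  set c : D := s1 * y with hcdef
  set T : D := (x * c) * (s2 * y) with hTdef
  have hds1 : d s1 = pi a := dsig _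
  have hds2 : d s2 = pi a := dsig _
  have hdc : d c = pi a * pi b := by
    rw [hcdef, hmul s1 y (by rw [hds1]; exact ha) (by rw [hy]; exact hb), hds1, hy]
  have hdxc : d (x * c) = pi a := by
    rw [hmul x c (by rw [hx]; exact ha) (by rw [hdc]; exact hab), hx, hdc, hS2]
  have hds2y : d (s2 * y) = pi a * pi b := by
    rw [hmul s2 y (by rw [hds2]; exact ha) (by rw [hy]; exact hb), hds2, hy]
  have hdT : d T = pi a := by
    rw [hTdef, hmul (x * c) (s2 * y) (by rw [hdxc]; exact ha) (by rw [hds2y]; exact hab),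
      hdxc, hds2y, hS2]
  have dpee : ∀ k, d (pee x y T k) = pi a := by
    intro k
    induction k with
    | zero => exact hdT
    | succ k ih =>
      have h1 : d (x * pee x y T k) = pi a * pi a := by
        rw [hmul x (pee x y T k) (by rw [hx]; exact ha) (by rw [ih]; exact ha), hx, ih]
      show d ((x * pee x y T k) * y) = pi a
      rw [hmul _ y (by rw [h1]; exact haa) (by rw [hy]; exact hb), h1, hy, hS1]
  have hdz : d (c * s2) = (pi a * pi b) * pi a := by
    rw [hmul c s2 (by rw [hdc]; exact hab) (by rw [hds2]; exact ha), hdc, hds2]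
  -- the key element equality, from finiteness of D
  have hc_pw : c = pw x (ν + 1) * pw y (ν + 1) := by
    rw [hcdef, hs1def, sig_pw, mul_assoc, ← pw_succ' y]
  have hxc : x * c = pw x (ν + 2) * pw y (ν + 1) := by
    rw [hc_pw, ← mul_assoc, ← pw_succ]
  have hs2pw : s2 = pw x (ν + 2) * pw y (ν + 1) := by
    rw [hs2def, sig_pw]
  have hs2y : s2 * y = pw x (ν + 2) * pw y (ν + 2) := by
    rw [hs2pw, mul_assoc, ← pw_succ' y]
  have hex : pw x (2 * q - 2 + (ν + 2) + 1) = pw x (ν + 1) := by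
    have h1 : 2 * q - 2 + (ν + 2) + 1 = (ν + 1) + p1 * (2 * p2) := by
      have h2 : p1 * (2 * p2) = 2 * q := by rw [hq]; ring
      rw [h2]; omega
    rw [h1, ← hper1 (ν + 1) (2 * p2) (by omega)]
  have hey : pw y ((ν + 2) + (2 * q - 2) + 1) = pw y (ν + 1) := by
    have h1 : (ν + 2) + (2 * q - 2) + 1 = (ν + 1) + p2 * (2 * p1) := by
      have h2 : p2 * (2 * p1) = 2 * q := by rw [hq]; ring
      rw [h2]; omega
    rw [h1, ← hper2 (ν + 1) (2 * p1) (by omega)]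
  have key : pee x y T (2 * q - 1) = c * s2 := by
    have h2q : 2 * q - 1 = (2 * q - 2) + 1 := by omega
    rw [h2q, pee_eq, hTdef, hxc, hs2y, hc_pw, hs2pw]
    simp only [mul_assoc]
    rw [← mul_assoc (pw x (2 * q - 2)) (pw x (ν + 2)), ← pw_add, hex, ← pw_add, hey]
  -- contradiction
  have final : pi a = (pi a * pi b) * pi a := by
    have h1 : d (pee x y T (2 * q - 1)) = d (c * s2) := by rw [key]
    rw [dpee, hdz] at h1
    exact h1
  apply pi_a_ne
  rw [final, ← pi_mul, ← pi_mul]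

/-- The semigroup `A = ⟨a, b ∣ aab = a⟩` is not an LWF semigroup. -/
theorem A_not_isLWF : ¬ IsLWF A := by
  classical
  intro h
  obtain ⟨D, iS, iF, d, hcov, hmul⟩ := h {pi a, pi a * pi a, pi b, pi a * pi b}
  obtain ⟨x, hx⟩ : pi a ∈ Set.range d := hcov (by simp)
  obtain ⟨y, hy⟩ : pi b ∈ Set.range d := hcov (by simp)
  exact @main_aux D iS (@Finite.of_fintype D iF) d _
    (by simp) (by simp) (by simp) (by simp) hmul x y hx hy

end Stmt15
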